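/- Let f : ℕ → ℝ be an essentially bounded arithmetic function and let N, h ∈ ℕ with h → ∞ and h = o(N) as N → ∞. Then for every ε > 0, I_f(N,h) = Σ_{a≠0} W(a)·C_f(a) + O_ε( N^ε·( Nh + h³ ) ). -/

import Mathlib

set_option maxHeartbeats 1000000


open Finset Filter Asymptotics

noncomputable section

/-- An arithmetic function is *essentially bounded* if `f n ≪_ε n^ε` for every `ε > 0`. -/
def EssBdd (f : ℕ → ℝ) : Prop :=
  ∀ ε : ℝ, 0 < ε → ∃ C : ℝ, ∀ n : ℕ, 1 ≤ n → |f n| ≤ C * (n : ℝ) ^ ε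

/-- The symmetry integral `I_f(N,h) = ∫_N^{2N} |∑_{|n-x|≤h} f(n) sgn(n-x)|² dx`. -/
def symInt (f : ℕ → ℝ) (N h : ℕ) : ℝ :=
  ∫ x in (N : ℝ)..(2 * (N : ℝ)),
    (∑ n ∈ Finset.Icc ⌈x - (h : ℝ)⌉ ⌊x + (h : ℝ)⌋,
      f n.toNat * Real.sign ((n : ℝ) - x)) ^ 2

/-- The weight `W(a) = 1_{[-2h,2h]}(a) · max(2h - 3|a|, |a| - 2h)`. -/
def Wt (h : ℕ) (a : ℤ) : ℝ :=
  if |a| ≤ 2 * (h : ℤ) then max (2 * (h : ℝ) - 3 * |(a : ℝ)|) (|(a : ℝ)| - 2 * (h : ℝ)) else 0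

/-- The correlation `C_f(a) = ∑_{N < n ≤ 2N} f(n) f(n-a)` (with `f` extended by `0`
to nonpositive arguments). -/
def Cf (f : ℕ → ℝ) (N : ℕ) (a : ℤ) : ℝ :=
  ∑ n ∈ Finset.Ioc (N : ℤ) (2 * (N : ℤ)), f n.toNat * f (n - a).toNat

open MeasureTheory Set


lemma sgn_step {c x : ℝ} (h : x ≠ c) : Real.sign (c - x) = if x < c then 1 else -1 := by
  rcases lt_or_gt_of_ne h with h1 | h1
  · rw [Real.sign_of_pos (by linarith), if_pos h1]
  · rw [Real.sign_of_neg (by linarith), if_neg (by linarith)]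

/-- a.e., `sgn(n-x)·sgn(m-x) = 1 - 2·1_{(min,max)}(x)`. -/
lemma ae_sgn_prod (n m : ℝ) :
    ∀ᵐ x : ℝ, Real.sign (n - x) * Real.sign (m - x)
      = 1 - 2 * (Set.Ioo (min n m) (max n m)).indicator (fun _ => (1:ℝ)) x := by
  have hfin : (volume : Measure ℝ) ({n, m} : Set ℝ) = 0 :=
    measure_union_null Real.volume_singleton Real.volume_singleton
  filter_upwards [measure_eq_zero_iff_ae_notMem.mp hfin] with x hx
  simp only [Set.mem_insert_iff, Set.mem_singleton_iff, not_or] at hx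
  obtain ⟨hxn, hxm⟩ := hx
  rw [sgn_step hxn, sgn_step hxm, Set.indicator_apply]
  by_cases hn : x < n <;> by_cases hm : x < m
  · have : x ∉ Set.Ioo (min n m) (max n m) := by
      simp only [Set.mem_Ioo, min_lt_iff, not_and_or]
      left; push_neg; constructor <;> linarith
    rw [if_pos hn, if_pos hm, if_neg this]; ring
  · have hm' : m < x := lt_of_le_of_ne (not_lt.mp hm) (Ne.symm hxm)
    rw [if_pos hn, if_neg hm, if_pos ⟨lt_of_le_of_lt (min_le_right _ _) hm',
      lt_of_lt_of_le hn (le_max_left _ _)⟩]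
    ring
  · have hn' : n < x := lt_of_le_of_ne (not_lt.mp hn) (Ne.symm hxn)
    rw [if_neg hn, if_pos hm, if_pos ⟨lt_of_le_of_lt (min_le_left _ _) hn',
      lt_of_lt_of_le hm (le_max_right _ _)⟩]
    ring
  · have hn' : n < x := lt_of_le_of_ne (not_lt.mp hn) (Ne.symm hxn)
    have hm' : m < x := lt_of_le_of_ne (not_lt.mp hm) (Ne.symm hxm)
    have : x ∉ Set.Ioo (min n m) (max n m) := by
      simp only [Set.mem_Ioo, lt_max_iff, not_and_or]
      right; push_neg; constructor <;> linarith
    rw [if_neg hn, if_neg hm, if_neg this]; ring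

/-- the window set of a pair -/
def win (h : ℕ) (n m : ℤ) : Set ℝ :=
  Set.Icc ((n:ℝ) - h) ((n:ℝ) + h) ∩ Set.Icc ((m:ℝ) - h) ((m:ℝ) + h)

def kerI (N h : ℕ) (n m : ℤ) : ℝ :=
  ∫ x in (N:ℝ)..(2*(N:ℝ)),
    (win h n m).indicator (fun x => Real.sign ((n:ℝ) - x) * Real.sign ((m:ℝ) - x)) x

lemma win_meas (h : ℕ) (n m : ℤ) : MeasurableSet (win h n m) :=
  (measurableSet_Icc).inter measurableSet_Icc

lemma win_eq (h : ℕ) (n m : ℤ) :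
    win h n m = Set.Icc ((max (n:ℝ) m) - h) ((min (n:ℝ) m) + h) := by
  rw [win, Set.Icc_inter_Icc, ← max_sub_sub_right, ← min_add_add_right]

lemma intervalIntegrable_ind (S : Set ℝ) (hS : MeasurableSet S) (k c d : ℝ) :
    IntervalIntegrable (S.indicator fun _ => k) volume c d := by
  rw [intervalIntegrable_iff]
  exact (integrableOn_const measure_Ioc_lt_top.ne enorm_ne_top).indicator hS

lemma integral_ind_one (S : Set ℝ) (hS : MeasurableSet S) (c d : ℝ) (hcd : c ≤ d) :
    ∫ x in c..d, S.indicator (fun _ => (1:ℝ)) x = (volume (S ∩ Set.Ioc c d)).toReal := by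
  rw [intervalIntegral.integral_of_le hcd]
  have : ∫ x in Set.Ioc c d, S.indicator (fun _ => (1:ℝ)) x
      = ∫ x, S.indicator (1 : ℝ → ℝ) x ∂(volume.restrict (Set.Ioc c d)) := rfl
  rw [this, integral_indicator_one hS, measureReal_def, Measure.restrict_apply hS]

lemma ae_ind_eq (h : ℕ) (n m : ℤ) :
    ∀ᵐ x : ℝ, (win h n m).indicator
        (fun x => Real.sign ((n:ℝ) - x) * Real.sign ((m:ℝ) - x)) x
      = (win h n m).indicator (fun _ => (1:ℝ)) x
        - 2 * ((win h n m ∩ Set.Ioo (min (n:ℝ) m) (max (n:ℝ) m)).indicator (fun _ => (1:ℝ)) x) := by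
  filter_upwards [ae_sgn_prod (n:ℝ) (m:ℝ)] with x hx
  by_cases hw : x ∈ win h n m
  · rw [Set.indicator_of_mem hw, Set.indicator_of_mem hw, hx]
    by_cases hio : x ∈ Set.Ioo (min (n:ℝ) m) (max (n:ℝ) m)
    · rw [Set.indicator_of_mem hio, Set.indicator_of_mem (Set.mem_inter hw hio)]
    · rw [Set.indicator_of_notMem hio, Set.indicator_of_notMem (fun hc => hio (Set.mem_of_mem_inter_right hc))]
  · rw [Set.indicator_of_notMem hw, Set.indicator_of_notMem hw,
      Set.indicator_of_notMem (fun hc => hw (Set.mem_of_mem_inter_left hc))]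
    ring

lemma kerI_integrand_integrable (N h : ℕ) (n m : ℤ) :
    IntervalIntegrable (fun x => (win h n m).indicator
      (fun x => Real.sign ((n:ℝ) - x) * Real.sign ((m:ℝ) - x)) x) volume (N:ℝ) (2*(N:ℝ)) := by
  have hmeas2 : MeasurableSet (win h n m ∩ Set.Ioo (min (n:ℝ) m) (max (n:ℝ) m)) :=
    (win_meas h n m).inter measurableSet_Ioo
  have base : IntervalIntegrable (fun x => (win h n m).indicator (fun _ => (1:ℝ)) x
      - 2 * ((win h n m ∩ Set.Ioo (min (n:ℝ) m) (max (n:ℝ) m)).indicator (fun _ => (1:ℝ)) x))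
      volume (N:ℝ) (2*(N:ℝ)) :=
    (intervalIntegrable_ind _ (win_meas h n m) 1 _ _).sub
      ((intervalIntegrable_ind _ hmeas2 1 _ _).const_mul 2)
  exact base.congr_ae (Filter.EventuallyEq.symm (ae_restrict_of_ae (ae_ind_eq h n m)))

lemma ker_eq (N h : ℕ) (n m : ℤ) :
    kerI N h n m = (volume (win h n m ∩ Set.Ioc (N:ℝ) (2*(N:ℝ)))).toReal
      - 2 * (volume ((win h n m ∩ Set.Ioo (min (n:ℝ) m) (max (n:ℝ) m)) ∩ Set.Ioc (N:ℝ) (2*(N:ℝ)))).toReal := by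
  have hN : (N:ℝ) ≤ 2*(N:ℝ) := by have := Nat.cast_nonneg (α := ℝ) N; linarith
  have hmeas2 : MeasurableSet (win h n m ∩ Set.Ioo (min (n:ℝ) m) (max (n:ℝ) m)) :=
    (win_meas h n m).inter measurableSet_Ioo
  have hae := ae_ind_eq h n m
  have h1 := intervalIntegrable_ind (win h n m) (win_meas h n m) 1 (N:ℝ) (2*(N:ℝ))
  have h2 := intervalIntegrable_ind _ hmeas2 (1:ℝ) (N:ℝ) (2*(N:ℝ))
  have h2' : IntervalIntegrable
      (fun x => 2 * ((win h n m ∩ Set.Ioo (min (n:ℝ) m) (max (n:ℝ) m)).indicator (fun _ => (1:ℝ)) x))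
      volume (N:ℝ) (2*(N:ℝ)) := h2.const_mul 2
  rw [kerI, intervalIntegral.integral_congr_ae (by filter_upwards [hae] with x hx _ using hx),
    intervalIntegral.integral_sub h1 h2', intervalIntegral.integral_const_mul,
    integral_ind_one _ (win_meas h n m) _ _ hN, integral_ind_one _ hmeas2 _ _ hN]

lemma volBetween {p q : ℝ} {T : Set ℝ} (h1 : Set.Ioo p q ⊆ T) (h2 : T ⊆ Set.Icc p q) :
    volume T = ENNReal.ofReal (q - p) := by
  refine le_antisymm ?_ ?_
  · calc volume T ≤ volume (Set.Icc p q) := measure_mono h2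
      _ = ENNReal.ofReal (q - p) := Real.volume_Icc
  · calc ENNReal.ofReal (q - p) = volume (Set.Ioo p q) := Real.volume_Ioo.symm
      _ ≤ volume T := measure_mono h1

lemma ker_bound (N h : ℕ) (n m : ℤ) : |kerI N h n m| ≤ 2 * h := by
  rw [ker_eq]
  set A := win h n m ∩ Set.Ioc (N:ℝ) (2*(N:ℝ)) with hA
  set B := (win h n m ∩ Set.Ioo (min (n:ℝ) m) (max (n:ℝ) m)) ∩ Set.Ioc (N:ℝ) (2*(N:ℝ)) with hB
  have hBA : B ⊆ A := fun x hx => ⟨hx.1.1, hx.2⟩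
  have hAfin : volume A ≤ ENNReal.ofReal (2 * h) := by
    calc volume A ≤ volume (Set.Icc ((n:ℝ) - h) ((n:ℝ) + h)) :=
          measure_mono (fun x hx => hx.1.1)
      _ = ENNReal.ofReal ((n:ℝ) + h - ((n:ℝ) - h)) := Real.volume_Icc
      _ = ENNReal.ofReal (2 * h) := by ring_nf
  have hane : volume A ≠ ⊤ := (lt_of_le_of_lt hAfin ENNReal.ofReal_lt_top).ne
  have h0 : (volume B).toReal ≤ (volume A).toReal :=
    ENNReal.toReal_mono hane (measure_mono hBA)
  have h1 : (volume A).toReal ≤ 2 * h := by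
    have := ENNReal.toReal_mono ENNReal.ofReal_ne_top hAfin
    rwa [ENNReal.toReal_ofReal (by positivity)] at this
  have h2 : 0 ≤ (volume B).toReal := ENNReal.toReal_nonneg
  rw [abs_le]
  constructor <;> linarith

lemma ker_zero_of_far {N h : ℕ} {n m : ℤ} (hfar : 2 * (h:ℤ) < |n - m|) : kerI N h n m = 0 := by
  have hw : win h n m = ∅ := by
    rw [win_eq, Set.Icc_eq_empty]
    intro hc
    have h1 : |(n:ℝ) - m| ≤ 2*h := by
      rw [← max_sub_min_eq_abs]
      linarith [hc, max_comm (n:ℝ) (m:ℝ), min_comm (n:ℝ) (m:ℝ)]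
    have h2 : (2*(h:ℝ)) < |(n:ℝ) - m| := by
      have : ((2 * (h:ℤ) : ℤ) : ℝ) < ((|n - m| : ℤ) : ℝ) := Int.cast_lt.2 hfar
      rw [Int.cast_abs] at this
      push_cast at this ⊢
      exact this
    linarith
  rw [ker_eq, hw]
  simp

lemma ker_zero_out {N h : ℕ} {n m : ℤ} (hout : (n:ℝ) + h < N ∨ 2*(N:ℝ) < (n:ℝ) - h) :
    kerI N h n m = 0 := by
  have hw : win h n m ∩ Set.Ioc (N:ℝ) (2*(N:ℝ)) = ∅ := by
    rw [Set.eq_empty_iff_forall_notMem]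
    rintro x ⟨⟨hx1, hx2⟩, hx3⟩
    rcases hout with hc | hc
    · exact absurd (lt_of_le_of_lt hx1.2 hc) (not_lt.2 (le_of_lt hx3.1))
    · exact absurd (lt_of_le_of_lt hx3.2 hc) (not_lt.2 hx1.1)
  rw [ker_eq]
  rw [Set.inter_assoc, Set.inter_comm (Set.Ioo _ _), ← Set.inter_assoc, hw]
  simp [hw]


lemma abs_Wt_le (h : ℕ) (a : ℤ) : |Wt h a| ≤ 2 * h := by
  rw [Wt]
  split_ifs with hc
  · have h1 : |(a:ℝ)| ≤ 2 * h := by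
      have : ((|a|:ℤ):ℝ) ≤ ((2 * (h:ℤ) : ℤ):ℝ) := Int.cast_le.2 hc
      rw [Int.cast_abs] at this; push_cast at this ⊢; exact this
    have h0 : 0 ≤ |(a:ℝ)| := abs_nonneg _
    rw [abs_le]
    constructor
    · rw [le_max_iff]; right; linarith
    · rw [max_le_iff]; constructor <;> linarith
  · rw [abs_zero]; positivity

lemma ker_exact {N h : ℕ} {n m : ℤ} (hne : n ≠ m) (hnear : |n - m| ≤ 2 * (h:ℤ))
    (hlo : (N:ℝ) ≤ max (n:ℝ) m - h) (hhi : min (n:ℝ) m + h ≤ 2*(N:ℝ)) :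
    kerI N h n m = Wt h (n - m) := by
  set mi := min (n:ℝ) m with hmi
  set ma := max (n:ℝ) m with hma
  set L := ma - (h:ℝ) with hL
  set R := mi + (h:ℝ) with hR
  have haa : ma - mi = |(n:ℝ) - m| := by
    rw [abs_sub_comm]; exact max_sub_min_eq_abs _ _
  have ha2 : |(n:ℝ) - m| ≤ 2*h := by
    have : ((|n - m|:ℤ):ℝ) ≤ ((2 * (h:ℤ) : ℤ):ℝ) := Int.cast_le.2 hnear
    rw [Int.cast_abs] at this; push_cast at this ⊢; exact this
  have hapos : 0 < |(n:ℝ) - m| := by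
    rw [abs_pos, sub_ne_zero]
    exact_mod_cast hne
  have hmile : mi ≤ ma := min_le_max
  have hLR : L ≤ R := by rw [hL, hR]; linarith
  have hLma : L ≤ ma := by rw [hL]; simp [Nat.cast_nonneg]
  have hmiR : mi ≤ R := by rw [hR]; simp [Nat.cast_nonneg]
  have vol1 : volume (win h n m ∩ Set.Ioc (N:ℝ) (2*(N:ℝ))) = ENNReal.ofReal (R - L) := by
    rw [win_eq]
    refine volBetween ?_ ?_
    · intro x hx
      exact ⟨⟨le_of_lt hx.1, le_of_lt hx.2⟩, ⟨lt_of_le_of_lt hlo hx.1, le_of_lt (lt_of_lt_of_le hx.2 hhi)⟩⟩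
    · exact fun x hx => hx.1
  set P := max L mi with hP
  set Q := min R ma with hQ
  have hPQ : P ≤ Q := by
    rw [hP, hQ, max_le_iff, le_min_iff, le_min_iff]
    exact ⟨⟨hLR, hLma⟩, ⟨hmiR, hmile⟩⟩
  have vol2 : volume ((win h n m ∩ Set.Ioo mi ma) ∩ Set.Ioc (N:ℝ) (2*(N:ℝ)))
      = ENNReal.ofReal (Q - P) := by
    rw [win_eq]
    refine volBetween ?_ ?_
    · intro x hx
      have hx1 : P < x := hx.1
      have hx2 : x < Q := hx.2
      rw [hP, max_lt_iff] at hx1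
      rw [hQ, lt_min_iff] at hx2
      exact ⟨⟨⟨le_of_lt hx1.1, le_of_lt hx2.1⟩, ⟨hx1.2, hx2.2⟩⟩,
        ⟨lt_of_le_of_lt hlo hx1.1, le_of_lt (lt_of_lt_of_le hx2.1 hhi)⟩⟩
    · rintro x ⟨⟨⟨ha1, ha2'⟩, ⟨hb1, hb2⟩⟩, _⟩
      constructor
      · rw [hP, max_le_iff]; exact ⟨ha1, le_of_lt hb1⟩
      · rw [hQ, le_min_iff]; exact ⟨ha2', le_of_lt hb2⟩
  rw [ker_eq, vol1, vol2, ENNReal.toReal_ofReal (by linarith), ENNReal.toReal_ofReal (by linarith)]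
  rw [Wt, if_pos hnear]
  have hcast : |((n - m : ℤ) : ℝ)| = |(n:ℝ) - m| := by push_cast; rfl
  rw [hcast]
  rcases le_total (|(n:ℝ) - m|) (h:ℝ) with hcase | hcase
  · have e1 : Q = ma := by rw [hQ, min_eq_right]; rw [hR]; linarith
    have e2 : P = mi := by rw [hP, max_eq_right]; rw [hL]; linarith
    rw [e1, e2, max_eq_left (by linarith)]
    rw [hL, hR]; linarith
  · have e1 : Q = R := by rw [hQ, min_eq_left]; rw [hR]; linarith
    have e2 : P = L := by rw [hP, max_eq_left]; rw [hL]; linarith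
    rw [e1, e2, max_eq_right (by linarith)]
    rw [hL, hR]; linarith


lemma myIntervalIntegrable_sum {ι : Type*} (s : Finset ι) {F : ι → ℝ → ℝ} {a b : ℝ}
    (hF : ∀ i ∈ s, IntervalIntegrable (F i) volume a b) :
    IntervalIntegrable (fun x => ∑ i ∈ s, F i x) volume a b := by
  rw [intervalIntegrable_iff]
  exact MeasureTheory.integrable_finset_sum s (fun i hi => (intervalIntegrable_iff.1 (hF i hi)))

lemma symInt_eq (f : ℕ → ℝ) (N h : ℕ) :
    symInt f N h = ∑ n ∈ Finset.Icc ((N:ℤ) - 2*(h:ℤ)) (2*(N:ℤ) + 2*(h:ℤ)),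
      ∑ m ∈ Finset.Icc ((N:ℤ) - 2*(h:ℤ)) (2*(N:ℤ) + 2*(h:ℤ)),
        f n.toNat * f m.toNat * kerI N h n m := by
  set J : Finset ℤ := Finset.Icc ((N:ℤ) - 2*(h:ℤ)) (2*(N:ℤ) + 2*(h:ℤ)) with hJ
  have hN : (N:ℝ) ≤ 2*(N:ℝ) := by have := Nat.cast_nonneg (α := ℝ) N; linarith
  -- pointwise identity on uIcc
  have key : Set.EqOn
      (fun x => (∑ n ∈ Finset.Icc ⌈x - (h : ℝ)⌉ ⌊x + (h : ℝ)⌋,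
        f n.toNat * Real.sign ((n : ℝ) - x)) ^ 2)
      (fun x => ∑ n ∈ J, ∑ m ∈ J,
        f n.toNat * f m.toNat * ((win h n m).indicator
          (fun y => Real.sign ((n:ℝ) - y) * Real.sign ((m:ℝ) - y)) x))
      (Set.uIcc (N:ℝ) (2*(N:ℝ))) := by
    intro x hx
    rw [Set.uIcc_of_le hN] at hx
    obtain ⟨hx1, hx2⟩ := hx
    have hmem : ∀ n : ℤ, n ∈ Finset.Icc ⌈x - (h : ℝ)⌉ ⌊x + (h : ℝ)⌋ ↔
        x ∈ Set.Icc ((n:ℝ) - h) ((n:ℝ) + h) := by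
      intro n
      rw [Finset.mem_Icc, Set.mem_Icc, Int.ceil_le, Int.le_floor]
      constructor <;> rintro ⟨a, b⟩ <;> constructor <;> linarith
    have hsub : Finset.Icc ⌈x - (h : ℝ)⌉ ⌊x + (h : ℝ)⌋ ⊆ J := by
      intro n hn
      rw [Finset.mem_Icc] at hn
      rw [hJ, Finset.mem_Icc]
      have l1 : ((N:ℤ) - 2*(h:ℤ) : ℤ) ≤ (⌈x - (h : ℝ)⌉ : ℤ) := by
        rw [Int.le_ceil_iff]
        push_cast
        have : (0:ℝ) ≤ h := Nat.cast_nonneg h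
        linarith
      have l2 : (⌊x + (h : ℝ)⌋ : ℤ) ≤ 2*(N:ℤ) + 2*(h:ℤ) := by
        rw [Int.floor_le_iff]
        push_cast
        have : (0:ℝ) ≤ h := Nat.cast_nonneg h
        linarith
      exact ⟨le_trans l1 hn.1, le_trans hn.2 l2⟩
    have e1 : ∑ n ∈ Finset.Icc ⌈x - (h : ℝ)⌉ ⌊x + (h : ℝ)⌋, f n.toNat * Real.sign ((n : ℝ) - x)
        = ∑ n ∈ J, (Set.Icc ((n:ℝ) - h) ((n:ℝ) + h)).indicator
            (fun y => f n.toNat * Real.sign ((n:ℝ) - y)) x := by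
      rw [show (∑ n ∈ Finset.Icc ⌈x - (h : ℝ)⌉ ⌊x + (h : ℝ)⌋, f n.toNat * Real.sign ((n : ℝ) - x))
          = ∑ n ∈ Finset.Icc ⌈x - (h : ℝ)⌉ ⌊x + (h : ℝ)⌋,
            (Set.Icc ((n:ℝ) - h) ((n:ℝ) + h)).indicator
              (fun y => f n.toNat * Real.sign ((n:ℝ) - y)) x from
        Finset.sum_congr rfl (fun n hn => (Set.indicator_of_mem ((hmem n).1 hn)
          (fun y => f n.toNat * Real.sign ((n:ℝ) - y))).symm)]
      exact Finset.sum_subset hsub (fun n _ hn =>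
        Set.indicator_of_notMem (fun hc => hn ((hmem n).2 hc)) _)
    dsimp only
    rw [e1, sq, Finset.sum_mul_sum]
    refine Finset.sum_congr rfl (fun n _ => Finset.sum_congr rfl (fun m _ => ?_))
    by_cases h1 : x ∈ Set.Icc ((n:ℝ) - h) ((n:ℝ) + h)
    · by_cases h2 : x ∈ Set.Icc ((m:ℝ) - h) ((m:ℝ) + h)
      · rw [Set.indicator_of_mem h1, Set.indicator_of_mem h2,
          Set.indicator_of_mem (show x ∈ win h n m from Set.mem_inter h1 h2)]
        ring
      · rw [Set.indicator_of_notMem h2,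
          Set.indicator_of_notMem (fun hc : x ∈ win h n m => h2 hc.2)]
        ring
    · rw [Set.indicator_of_notMem h1,
        Set.indicator_of_notMem (fun hc : x ∈ win h n m => h1 hc.1)]
      ring
  rw [symInt, intervalIntegral.integral_congr key]
  have swap1 : (∫ x in (N:ℝ)..(2*(N:ℝ)), ∑ n ∈ J, ∑ m ∈ J,
        f n.toNat * f m.toNat * ((win h n m).indicator
          (fun y => Real.sign ((n:ℝ) - y) * Real.sign ((m:ℝ) - y)) x))
      = ∑ n ∈ J, ∫ x in (N:ℝ)..(2*(N:ℝ)), ∑ m ∈ J,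
        f n.toNat * f m.toNat * ((win h n m).indicator
          (fun y => Real.sign ((n:ℝ) - y) * Real.sign ((m:ℝ) - y)) x) :=
    intervalIntegral.integral_finset_sum (μ := volume) (s := J)
      (f := fun n x => ∑ m ∈ J, f n.toNat * f m.toNat * ((win h n m).indicator
        (fun y => Real.sign ((n:ℝ) - y) * Real.sign ((m:ℝ) - y)) x))
      (fun n _ => myIntervalIntegrable_sum J
        (fun m _ => ((kerI_integrand_integrable N h n m).const_mul (f n.toNat * f m.toNat))))
  rw [swap1]
  refine Finset.sum_congr rfl (fun n _ => ?_)
  have swap2 : (∫ x in (N:ℝ)..(2*(N:ℝ)), ∑ m ∈ J,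
        f n.toNat * f m.toNat * ((win h n m).indicator
          (fun y => Real.sign ((n:ℝ) - y) * Real.sign ((m:ℝ) - y)) x))
      = ∑ m ∈ J, ∫ x in (N:ℝ)..(2*(N:ℝ)),
        f n.toNat * f m.toNat * ((win h n m).indicator
          (fun y => Real.sign ((n:ℝ) - y) * Real.sign ((m:ℝ) - y)) x) :=
    intervalIntegral.integral_finset_sum (μ := volume) (s := J)
      (f := fun m x => f n.toNat * f m.toNat * ((win h n m).indicator
        (fun y => Real.sign ((n:ℝ) - y) * Real.sign ((m:ℝ) - y)) x))
      (fun m _ => ((kerI_integrand_integrable N h n m).const_mul (f n.toNat * f m.toNat)))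
  rw [swap2]
  refine Finset.sum_congr rfl (fun m _ => ?_)
  rw [intervalIntegral.integral_const_mul]
  rfl


def Vv (N h : ℕ) (n m : ℤ) : ℝ :=
  if (N:ℤ) < n ∧ n ≤ 2*(N:ℤ) ∧ m ≠ n then Wt h (n-m) else 0

lemma Wt_zero {h : ℕ} {a : ℤ} (ha : 2 * (h:ℤ) < |a|) : Wt h a = 0 := by
  rw [Wt, if_neg (not_le.2 ha)]

lemma wsum_eq (f : ℕ → ℝ) (N h : ℕ) :
    ∑ a ∈ (Finset.Icc (-(2 * (h:ℤ))) (2 * (h:ℤ))).filter (· ≠ 0), Wt h a * Cf f N a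
    = ∑ n ∈ Finset.Icc ((N:ℤ) - 2*(h:ℤ)) (2*(N:ℤ) + 2*(h:ℤ)),
      ∑ m ∈ Finset.Icc ((N:ℤ) - 2*(h:ℤ)) (2*(N:ℤ) + 2*(h:ℤ)),
        f n.toNat * f m.toNat * Vv N h n m := by
  set J : Finset ℤ := Finset.Icc ((N:ℤ) - 2*(h:ℤ)) (2*(N:ℤ) + 2*(h:ℤ)) with hJ
  set A : Finset ℤ := (Finset.Icc (-(2 * (h:ℤ))) (2 * (h:ℤ))).filter (· ≠ 0) with hA
  have hh0 : (0:ℤ) ≤ 2*(h:ℤ) := by positivity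
  -- RHS: reduce outer sum to Ioc
  have houter : ∀ n ∈ J, n ∉ Finset.Ioc (N:ℤ) (2*(N:ℤ)) →
      (∑ m ∈ J, f n.toNat * f m.toNat * Vv N h n m) = 0 := by
    intro n _ hn
    rw [Finset.mem_Ioc] at hn
    refine Finset.sum_eq_zero (fun m _ => ?_)
    rw [Vv, if_neg (fun hc => hn ⟨hc.1, hc.2.1⟩)]
    ring
  have hsubIoc : Finset.Ioc (N:ℤ) (2*(N:ℤ)) ⊆ J := by
    intro n hn
    rw [Finset.mem_Ioc] at hn
    rw [hJ, Finset.mem_Icc]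
    omega
  rw [← Finset.sum_subset hsubIoc houter]
  -- LHS: unfold Cf, swap sums
  have hL : ∑ a ∈ A, Wt h a * Cf f N a
      = ∑ n ∈ Finset.Ioc (N:ℤ) (2*(N:ℤ)), ∑ a ∈ A, Wt h a * (f n.toNat * f (n - a).toNat) := by
    rw [Finset.sum_comm]
    refine Finset.sum_congr rfl (fun a _ => ?_)
    rw [Cf, Finset.mul_sum]
  rw [hL]
  refine Finset.sum_congr rfl (fun n hn => ?_)
  rw [Finset.mem_Ioc] at hn
  -- inner: reduce J-sum to B := Icc(n-2h, n+2h) \ {n}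
  set B : Finset ℤ := (Finset.Icc (n - 2*(h:ℤ)) (n + 2*(h:ℤ))).filter (· ≠ n) with hB
  have hsubB : B ⊆ J := by
    intro m hm
    rw [hB, Finset.mem_filter, Finset.mem_Icc] at hm
    rw [hJ, Finset.mem_Icc]
    omega
  have hvanish : ∀ m ∈ J, m ∉ B → f n.toNat * f m.toNat * Vv N h n m = 0 := by
    intro m _ hm
    rw [hB, Finset.mem_filter, Finset.mem_Icc] at hm
    push_neg at hm
    by_cases hmn : m = n
    · rw [Vv, if_neg (fun hc => hc.2.2 hmn)]; ring
    · have hfar : 2*(h:ℤ) < |n - m| := by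
        have h2 : ¬((n - 2*(h:ℤ) ≤ m) ∧ m ≤ n + 2*(h:ℤ)) := fun hc => hmn (hm hc)
        rw [lt_abs]
        omega
      rw [Vv]
      split_ifs with hc
      · rw [Wt_zero hfar]; ring
      · ring
  rw [← Finset.sum_subset hsubB hvanish]
  -- now a bijection a ↦ n - a between A and B
  refine Finset.sum_nbij' (fun a => n - a) (fun m => n - m) ?_ ?_ ?_ ?_ ?_
  · intro a ha
    rw [hA, Finset.mem_filter, Finset.mem_Icc] at ha
    rw [hB, Finset.mem_filter, Finset.mem_Icc]
    obtain ⟨⟨ha1, ha2⟩, ha3⟩ := ha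
    have ha3' : a ≠ 0 := ha3
    refine ⟨⟨by omega, by omega⟩, fun hc => ha3' (by omega)⟩
  · intro m hm
    rw [hB, Finset.mem_filter, Finset.mem_Icc] at hm
    rw [hA, Finset.mem_filter, Finset.mem_Icc]
    obtain ⟨⟨hm1, hm2⟩, hm3⟩ := hm
    refine ⟨⟨by omega, by omega⟩, fun hc => hm3 (by omega)⟩
  · intro a _; omega
  · intro m _; omega
  · intro a ha
    rw [hA, Finset.mem_filter] at ha
    have hmn : n - a ≠ n := fun hc => ha.2 (by omega)
    rw [Vv, if_pos ⟨hn.1, hn.2, hmn⟩]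
    have : n - (n - a) = a := by ring
    rw [this]
    ring

lemma abs_Vv_le (N h : ℕ) (n m : ℤ) : |Vv N h n m| ≤ 2 * h := by
  rw [Vv]
  split_ifs with hc
  · exact abs_Wt_le h (n - m)
  · rw [abs_zero]; positivity

lemma ker_eq_Vv {N h : ℕ} {n m : ℤ} (hh : 1 ≤ h) (hg1 : (N:ℤ) + h ≤ n)
    (hg2 : n + (h:ℤ) ≤ 2*(N:ℤ)) (hne : m ≠ n) :
    kerI N h n m = Vv N h n m := by
  by_cases hfar : 2*(h:ℤ) < |n - m|
  · rw [ker_zero_of_far hfar, Vv]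
    split_ifs with hc
    · rw [Wt_zero hfar]
    · rfl
  · push_neg at hfar
    have hg1' : (N:ℝ) + h ≤ (n:ℝ) := by exact_mod_cast hg1
    have hg2' : (n:ℝ) + h ≤ 2*(N:ℝ) := by exact_mod_cast hg2
    have hlo : (N:ℝ) ≤ max (n:ℝ) m - h := by
      have := le_max_left (n:ℝ) m
      linarith
    have hhi : min (n:ℝ) m + h ≤ 2*(N:ℝ) := by
      have := min_le_left (n:ℝ) m
      linarith
    rw [ker_exact (Ne.symm hne) hfar hlo hhi, Vv, if_pos ⟨by omega, by omega, hne⟩]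

lemma kerVv_zero_far {N h : ℕ} {n m : ℤ} (hfar : 2*(h:ℤ) < |n - m|) :
    kerI N h n m - Vv N h n m = 0 := by
  rw [ker_zero_of_far hfar, Vv]
  split_ifs with hc
  · rw [Wt_zero hfar]; ring
  · ring

/-- The main deterministic estimate. -/
lemma main_est (f : ℕ → ℝ) (N h : ℕ) (B : ℝ)
    (hB : ∀ n : ℤ, n ≤ 2*(N:ℤ) + 2*(h:ℤ) → |f n.toNat| ≤ B) (hh : 1 ≤ h) :
    |symInt f N h - ∑ a ∈ (Finset.Icc (-(2 * (h:ℤ))) (2 * (h:ℤ))).filter (· ≠ 0),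
        Wt h a * Cf f N a|
      ≤ B^2 * (((N:ℝ) + 4*h + 1) * (2*h) + (6*h+2) * ((4*h+1) * (4*h))) := by
  have hB0 : 0 ≤ B := le_trans (abs_nonneg _) (hB 0 (by positivity))
  set J : Finset ℤ := Finset.Icc ((N:ℤ) - 2*(h:ℤ)) (2*(N:ℤ) + 2*(h:ℤ)) with hJ
  rw [symInt_eq, wsum_eq]
  simp only [← Finset.sum_sub_distrib]
  have rowbound : ∀ n ∈ J,
      |∑ m ∈ J, (f n.toNat * f m.toNat * kerI N h n m - f n.toNat * f m.toNat * Vv N h n m)|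
      ≤ B^2 * (if ((N:ℤ) + h ≤ n ∧ n + (h:ℤ) ≤ 2*(N:ℤ)) then 2*(h:ℝ) else (4*h+1) * (4*h)) := by
    intro n hnJ
    rw [hJ, Finset.mem_Icc] at hnJ
    have hterm : ∀ m : ℤ, m ∈ J → |f n.toNat * f m.toNat * kerI N h n m
        - f n.toNat * f m.toNat * Vv N h n m| ≤ B^2 * (4*h) := by
      intro m hm
      rw [hJ, Finset.mem_Icc] at hm
      have h1 : |f n.toNat| ≤ B := hB n (by omega)
      have h2 : |f m.toNat| ≤ B := hB m (by omega)
      have h3 : |kerI N h n m - Vv N h n m| ≤ 4*h := by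
        calc |kerI N h n m - Vv N h n m| ≤ |kerI N h n m| + |Vv N h n m| := abs_sub _ _
          _ ≤ 2*h + 2*h := add_le_add (ker_bound N h n m) (abs_Vv_le N h n m)
          _ = 4*h := by ring
      calc |f n.toNat * f m.toNat * kerI N h n m - f n.toNat * f m.toNat * Vv N h n m|
          = |f n.toNat| * |f m.toNat| * |kerI N h n m - Vv N h n m| := by
            rw [← abs_mul, ← abs_mul, ← mul_sub]
        _ ≤ B * B * (4*h) := by
            apply mul_le_mul (mul_le_mul h1 h2 (abs_nonneg _) hB0) h3 (abs_nonneg _) (by positivity)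
        _ = B^2 * (4*h) := by ring
    split_ifs with hgood
    · -- good row: only the diagonal survives
      have hdiag : ∑ m ∈ J, (f n.toNat * f m.toNat * kerI N h n m
          - f n.toNat * f m.toNat * Vv N h n m)
          = f n.toNat * f n.toNat * kerI N h n n - f n.toNat * f n.toNat * Vv N h n n := by
        refine Finset.sum_eq_single_of_mem n (by rw [hJ, Finset.mem_Icc]; omega) ?_
        intro m _ hmn
        rw [ker_eq_Vv hh hgood.1 hgood.2 hmn]
        ring
      rw [hdiag]
      have hVnn : Vv N h n n = 0 := by rw [Vv, if_neg (fun hc => hc.2.2 rfl)]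
      rw [hVnn, mul_zero, sub_zero, abs_mul, abs_mul]
      have h1 : |f n.toNat| ≤ B := hB n (by omega)
      calc |f n.toNat| * |f n.toNat| * |kerI N h n n| ≤ B * B * (2*h) := by
            apply mul_le_mul (mul_le_mul h1 h1 (abs_nonneg _) hB0) (ker_bound N h n n)
              (abs_nonneg _) (by positivity)
        _ = B^2 * (2*(h:ℝ)) := by ring
    · -- bad row: at most 4h+1 nonzero terms, each ≤ B²·4h
      calc |∑ m ∈ J, (f n.toNat * f m.toNat * kerI N h n m - f n.toNat * f m.toNat * Vv N h n m)|
          ≤ ∑ m ∈ J, |f n.toNat * f m.toNat * kerI N h n m - f n.toNat * f m.toNat * Vv N h n m| :=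
            Finset.abs_sum_le_sum_abs _ _
        _ = ∑ m ∈ J.filter (fun m => |n - m| ≤ 2*(h:ℤ)),
            |f n.toNat * f m.toNat * kerI N h n m - f n.toNat * f m.toNat * Vv N h n m| := by
            refine (Finset.sum_filter_of_ne ?_).symm
            intro m _ hne
            by_contra hc
            push_neg at hc
            exact hne (by rw [← mul_sub, kerVv_zero_far hc, mul_zero, abs_zero])
        _ ≤ ∑ m ∈ J.filter (fun m => |n - m| ≤ 2*(h:ℤ)), B^2 * (4*(h:ℝ)) :=
            Finset.sum_le_sum (fun m hm => hterm m (Finset.mem_of_mem_filter m hm))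
        _ = (J.filter (fun m => |n - m| ≤ 2*(h:ℤ))).card * (B^2 * (4*(h:ℝ))) := by
            rw [Finset.sum_const, nsmul_eq_mul]
        _ ≤ (4*(h:ℝ)+1) * (B^2 * (4*(h:ℝ))) := by
            have hsub : J.filter (fun m => |n - m| ≤ 2*(h:ℤ)) ⊆
                Finset.Icc (n - 2*(h:ℤ)) (n + 2*(h:ℤ)) := by
              intro m hm
              rw [Finset.mem_filter] at hm
              rw [Finset.mem_Icc]
              have := abs_le.1 hm.2
              omega
            have hcard : (J.filter (fun m => |n - m| ≤ 2*(h:ℤ))).card ≤ 4*h+1 := by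
              calc (J.filter (fun m => |n - m| ≤ 2*(h:ℤ))).card
                  ≤ (Finset.Icc (n - 2*(h:ℤ)) (n + 2*(h:ℤ))).card := Finset.card_le_card hsub
                _ = 4*h+1 := by rw [Int.card_Icc]; omega
            have : ((J.filter (fun m => |n - m| ≤ 2*(h:ℤ))).card : ℝ) ≤ 4*(h:ℝ)+1 := by
              exact_mod_cast hcard
            apply mul_le_mul_of_nonneg_right this (by positivity)
        _ = B^2 * ((4*(h:ℝ)+1) * (4*(h:ℝ))) := by ring
  calc |∑ n ∈ J, ∑ m ∈ J, (f n.toNat * f m.toNat * kerI N h n m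
        - f n.toNat * f m.toNat * Vv N h n m)|
      ≤ ∑ n ∈ J, |∑ m ∈ J, (f n.toNat * f m.toNat * kerI N h n m
        - f n.toNat * f m.toNat * Vv N h n m)| := Finset.abs_sum_le_sum_abs _ _
    _ ≤ ∑ n ∈ J, B^2 * (if ((N:ℤ) + h ≤ n ∧ n + (h:ℤ) ≤ 2*(N:ℤ)) then 2*(h:ℝ)
        else (4*h+1) * (4*h)) := Finset.sum_le_sum rowbound
    _ ≤ B^2 * (((N:ℝ) + 4*h + 1) * (2*h) + (6*h+2) * ((4*h+1) * (4*h))) := by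
      rw [← Finset.mul_sum]
      apply mul_le_mul_of_nonneg_left _ (by positivity)
      rw [← Finset.sum_filter_add_sum_filter_not J (fun n => (N:ℤ) + h ≤ n ∧ n + (h:ℤ) ≤ 2*(N:ℤ))]
      have e1 : ∑ n ∈ J.filter (fun n => (N:ℤ) + h ≤ n ∧ n + (h:ℤ) ≤ 2*(N:ℤ)),
          (if ((N:ℤ) + h ≤ n ∧ n + (h:ℤ) ≤ 2*(N:ℤ)) then 2*(h:ℝ) else (4*h+1) * (4*h))
          = (J.filter (fun n => (N:ℤ) + h ≤ n ∧ n + (h:ℤ) ≤ 2*(N:ℤ))).card * (2*(h:ℝ)) := by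
        rw [Finset.sum_congr rfl (fun n hn => if_pos (Finset.mem_filter.1 hn).2),
          Finset.sum_const, nsmul_eq_mul]
      have e2 : ∑ n ∈ J.filter (fun n => ¬((N:ℤ) + h ≤ n ∧ n + (h:ℤ) ≤ 2*(N:ℤ))),
          (if ((N:ℤ) + h ≤ n ∧ n + (h:ℤ) ≤ 2*(N:ℤ)) then 2*(h:ℝ) else (4*h+1) * (4*h))
          = (J.filter (fun n => ¬((N:ℤ) + h ≤ n ∧ n + (h:ℤ) ≤ 2*(N:ℤ)))).card
            * ((4*(h:ℝ)+1) * (4*h)) := by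
        rw [Finset.sum_congr rfl (fun n hn => if_neg (Finset.mem_filter.1 hn).2),
          Finset.sum_const, nsmul_eq_mul]
      rw [e1, e2]
      have c1 : ((J.filter (fun n => (N:ℤ) + h ≤ n ∧ n + (h:ℤ) ≤ 2*(N:ℤ))).card : ℝ)
          ≤ (N:ℝ) + 4*h + 1 := by
        have : (J.filter (fun n => (N:ℤ) + h ≤ n ∧ n + (h:ℤ) ≤ 2*(N:ℤ))).card ≤ N + 4*h + 1 := by
          calc (J.filter _).card ≤ J.card := Finset.card_filter_le _ _
            _ = N + 4*h + 1 := by rw [hJ, Int.card_Icc]; omega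
        exact_mod_cast this
      have c2 : ((J.filter (fun n => ¬((N:ℤ) + h ≤ n ∧ n + (h:ℤ) ≤ 2*(N:ℤ)))).card : ℝ)
          ≤ 6*(h:ℝ) + 2 := by
        have hsub : J.filter (fun n => ¬((N:ℤ) + h ≤ n ∧ n + (h:ℤ) ≤ 2*(N:ℤ)))
            ⊆ Finset.Icc ((N:ℤ) - 2*h) ((N:ℤ) + h - 1) ∪ Finset.Icc (2*(N:ℤ) - h + 1) (2*(N:ℤ) + 2*h) := by
          intro n hn
          rw [Finset.mem_filter, hJ, Finset.mem_Icc] at hn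
          rw [Finset.mem_union, Finset.mem_Icc, Finset.mem_Icc]
          omega
        have : (J.filter (fun n => ¬((N:ℤ) + h ≤ n ∧ n + (h:ℤ) ≤ 2*(N:ℤ)))).card ≤ 6*h + 2 := by
          calc (J.filter _).card
              ≤ (Finset.Icc ((N:ℤ) - 2*h) ((N:ℤ) + h - 1) ∪ Finset.Icc (2*(N:ℤ) - h + 1) (2*(N:ℤ) + 2*h)).card :=
                Finset.card_le_card hsub
            _ ≤ (Finset.Icc ((N:ℤ) - 2*h) ((N:ℤ) + h - 1)).card
                + (Finset.Icc (2*(N:ℤ) - h + 1) (2*(N:ℤ) + 2*h)).card := Finset.card_union_le _ _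
            _ ≤ 6*h + 2 := by rw [Int.card_Icc, Int.card_Icc]; omega
        exact_mod_cast this
      have hterm2 : (0:ℝ) ≤ (4*(h:ℝ)+1) * (4*h) := by positivity
      nlinarith [c1, c2, hterm2, mul_le_mul_of_nonneg_right c1 (show (0:ℝ) ≤ 2*(h:ℝ) by positivity),
        mul_le_mul_of_nonneg_right c2 hterm2]



theorem statement9 (f : ℕ → ℝ) (hf : EssBdd f) (h : ℕ → ℕ)
    (hh1 : Tendsto h atTop atTop)
    (hh2 : (fun N => (h N : ℝ)) =o[atTop] (fun N => (N : ℝ)))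
    (ε : ℝ) (hε : 0 < ε) :
    (fun N => symInt f N (h N)
        - ∑ a ∈ (Finset.Icc (-(2 * (h N : ℤ))) (2 * (h N : ℤ))).filter (· ≠ 0),
            Wt (h N) a * Cf f N a)
      =O[atTop] (fun N => (N : ℝ) ^ ε * ((N : ℝ) * (h N : ℝ) + (h N : ℝ) ^ 3)) := by
  obtain ⟨C, hC⟩ := hf (ε/2) (half_pos hε)
  set D : ℝ := |C| + |f 0| + 1 with hD
  have hD1 : 1 ≤ D := by
    rw [hD]
    have := abs_nonneg C
    have := abs_nonneg (f 0)
    linarith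
  rw [isBigO_iff]
  refine ⟨D^2 * 4 ^ ε * 200, ?_⟩
  have hev1 : ∀ᶠ N : ℕ in atTop, 1 ≤ h N := hh1.eventually_ge_atTop 1
  have hev2 : ∀ᶠ N : ℕ in atTop, 1 ≤ N := eventually_ge_atTop 1
  have hev3 : ∀ᶠ N : ℕ in atTop, ‖(h N : ℝ)‖ ≤ 1/2 * ‖(N : ℝ)‖ :=
    hh2.def (by norm_num)
  filter_upwards [hev1, hev2, hev3] with N hhN hN1 hhalf
  have hN1' : (1:ℝ) ≤ (N:ℝ) := by exact_mod_cast hN1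
  have hh1' : (1:ℝ) ≤ (h N : ℝ) := by exact_mod_cast hhN
  have hhalf' : (h N : ℝ) ≤ (N:ℝ) := by
    rw [Real.norm_eq_abs, Real.norm_eq_abs, abs_of_nonneg (by positivity),
      abs_of_nonneg (by positivity)] at hhalf
    linarith
  set B : ℝ := D * (4*(N:ℝ)) ^ (ε/2) with hBdef
  have h4N1 : (1:ℝ) ≤ 4*(N:ℝ) := by linarith
  have h4Npos : (0:ℝ) < 4*(N:ℝ) := by linarith
  have hrpow1 : (1:ℝ) ≤ (4*(N:ℝ)) ^ (ε/2) :=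
    Real.one_le_rpow h4N1 (by positivity)
  have hBbound : ∀ n : ℤ, n ≤ 2*(N:ℤ) + 2*((h N):ℤ) → |f n.toNat| ≤ B := by
    intro n hn
    have hk : (n.toNat : ℝ) ≤ 4*(N:ℝ) := by
      have h1 : n.toNat ≤ (2*(N:ℤ) + 2*((h N):ℤ)).toNat := by
        rcases le_or_gt n 0 with hc | hc
        · simp [Int.toNat_of_nonpos hc]
        · omega
      have h2 : ((2*(N:ℤ) + 2*((h N):ℤ)).toNat : ℝ) ≤ 4*(N:ℝ) := by
        have : (2*(N:ℤ) + 2*((h N):ℤ)).toNat = 2*N + 2*(h N) := by omega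
        rw [this]
        push_cast
        linarith
      calc (n.toNat : ℝ) ≤ ((2*(N:ℤ) + 2*((h N):ℤ)).toNat : ℝ) := by exact_mod_cast h1
        _ ≤ 4*(N:ℝ) := h2
    rcases Nat.eq_zero_or_pos n.toNat with h0 | h0
    · rw [h0, hBdef]
      calc |f 0| ≤ D * 1 := by rw [mul_one, hD]; have := abs_nonneg C; linarith
        _ ≤ D * (4*(N:ℝ)) ^ (ε/2) := by
            apply mul_le_mul_of_nonneg_left hrpow1 (by linarith)
    · calc |f n.toNat| ≤ C * (n.toNat : ℝ) ^ (ε/2) := hC n.toNat h0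
        _ ≤ |C| * (n.toNat : ℝ) ^ (ε/2) := by
            apply mul_le_mul_of_nonneg_right (le_abs_self C) (by positivity)
        _ ≤ D * (4*(N:ℝ)) ^ (ε/2) := by
            apply mul_le_mul ?_ ?_ (by positivity) (by linarith [hD1])
            · rw [hD]; have := abs_nonneg (f 0); linarith
            · exact Real.rpow_le_rpow (by positivity) hk (by positivity)
  have hmain := main_est f N (h N) B hBbound hhN
  rw [Real.norm_eq_abs, Real.norm_eq_abs]
  have hEbound : ((N:ℝ) + 4*(h N) + 1) * (2*(h N)) + (6*(h N)+2) * ((4*(h N)+1) * (4*(h N)))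
      ≤ 200 * ((N:ℝ) * (h N) + (h N)^3) := by
    set H := (h N : ℝ)
    have hH2 : H^2 ≤ H^3 := by nlinarith
    nlinarith [mul_le_mul_of_nonneg_right hhalf' (show (0:ℝ) ≤ H by linarith),
      mul_le_mul_of_nonneg_right hh1' (show (0:ℝ) ≤ H^2 by positivity)]
  have hB2 : B^2 = D^2 * (4:ℝ)^ε * (N:ℝ)^ε := by
    rw [hBdef, mul_pow, ← Real.rpow_natCast ((4*(N:ℝ)) ^ (ε/2)) 2, ← Real.rpow_mul (by positivity)]
    norm_num
    rw [Real.mul_rpow (by norm_num) (by positivity), mul_assoc]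
  have hB2nn : 0 ≤ B^2 := sq_nonneg B
  calc |symInt f N (h N) - ∑ a ∈ (Finset.Icc (-(2 * (h N : ℤ))) (2 * (h N : ℤ))).filter (· ≠ 0),
        Wt (h N) a * Cf f N a|
      ≤ B^2 * (((N:ℝ) + 4*(h N) + 1) * (2*(h N)) + (6*(h N)+2) * ((4*(h N)+1) * (4*(h N)))) := hmain
    _ ≤ B^2 * (200 * ((N:ℝ) * (h N) + (h N)^3)) := mul_le_mul_of_nonneg_left hEbound hB2nn
    _ = D^2 * 4^ε * 200 * ((N:ℝ)^ε * ((N:ℝ) * (h N) + (h N)^3)) := by rw [hB2]; ring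
    _ ≤ D^2 * 4^ε * 200 * |(N:ℝ)^ε * ((N:ℝ) * (h N) + (h N)^3)| := by
        apply mul_le_mul_of_nonneg_left (le_abs_self _) (by positivity)
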